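/- Mirror Descent main inequality: Let f : X → ℝ be convex and subdifferentiable on the convex set X, let d be a 1-strongly convex d.g.f. with Bregman divergence V, and for h > 0 define x⁺ = Mirr_x(h∇f(x)) = argmin_{u ∈ X} {⟨h∇f(x), u⟩ + V(x, u)}. Then for every y ∈ X: h⟨∇f(x), x - y⟩ ≤ (h²/2)‖∇f(x)‖*² + V(x, y) - V(x⁺, y). -/

import Mathlib

/-- Bregman divergence `V(x,y) = d y - d x - ⟨∇d x, y - x⟩`. -/
def bregman {E : Type*} [NormedAddCommGroup E] [NormedSpace ℝ E]
    (d : E → ℝ) (Gd : E → E →L[ℝ] ℝ) (x y : E) : ℝ :=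
  d y - d x - Gd x (y - x)

/-- Strong convexity of `d` (in gradient-monotonicity form) gives the lower bound
`V(a,b) ≥ ‖b - a‖²/2`. -/
lemma bregman_lower_bound {E : Type*} [NormedAddCommGroup E] [NormedSpace ℝ E]
    (X : Set E) (hX : Convex ℝ X)
    (d : E → ℝ) (Gd : E → E →L[ℝ] ℝ)
    (hddiff : ∀ x ∈ X, HasFDerivWithinAt d (Gd x) X x)
    (hstrong : ∀ x ∈ X, ∀ y ∈ X, (Gd x - Gd y) (x - y) ≥ ‖x - y‖ ^ 2)
    {a b : E} (ha : a ∈ X) (hb : b ∈ X) :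
    ‖b - a‖ ^ 2 / 2 ≤ bregman d Gd a b := by
  set v : E := b - a with hv
  set γ : ℝ → E := fun t => a + t • v with hγ
  have hmaps : Set.MapsTo γ (Set.Icc (0:ℝ) 1) X := by
    intro t ht
    have : γ t = (1 - t) • a + t • b := by
      simp only [hγ, hv]
      module
    rw [this]
    exact hX ha hb (by linarith [ht.2]) ht.1 (by ring)
  -- g t = d (γ t) - t * Gd a v - t^2/2 ‖v‖^2 is monotone on [0,1]
  set g : ℝ → ℝ := fun t => d (γ t) - t * Gd a v - t ^ 2 / 2 * ‖v‖ ^ 2 with hg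
  have hγd : ∀ t : ℝ, HasDerivWithinAt γ v (Set.Icc 0 1) t := by
    intro t
    have : HasDerivAt γ v t := by
      simpa [hγ] using ((hasDerivAt_id t).smul_const v).const_add a
    exact this.hasDerivWithinAt
  have hgd : ∀ t ∈ Set.Icc (0:ℝ) 1,
      HasDerivWithinAt g (Gd (γ t) v - Gd a v - t * ‖v‖ ^ 2) (Set.Icc 0 1) t := by
    intro t ht
    have h1 : HasDerivWithinAt (fun t => d (γ t)) (Gd (γ t) v) (Set.Icc 0 1) t :=
      (hddiff (γ t) (hmaps ht)).comp_hasDerivWithinAt t (hγd t) hmaps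
    have h2 : HasDerivWithinAt (fun t : ℝ => t * Gd a v) (Gd a v) (Set.Icc 0 1) t := by
      simpa using ((hasDerivAt_id t).mul_const (Gd a v)).hasDerivWithinAt
    have h3 : HasDerivWithinAt (fun t : ℝ => t ^ 2 / 2 * ‖v‖ ^ 2) (t * ‖v‖ ^ 2)
        (Set.Icc 0 1) t := by
      have : HasDerivAt (fun t : ℝ => t ^ 2 / 2 * ‖v‖ ^ 2) (t * ‖v‖ ^ 2) t := by
        have := ((hasDerivAt_pow 2 t).div_const 2).mul_const (‖v‖ ^ 2)
        simpa using this.congr_deriv (by ring)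
      exact this.hasDerivWithinAt
    exact (h1.sub h2).sub h3
  have hderiv_nonneg : ∀ t ∈ Set.Icc (0:ℝ) 1, 0 ≤ Gd (γ t) v - Gd a v - t * ‖v‖ ^ 2 := by
    intro t ht
    rcases eq_or_lt_of_le ht.1 with h0 | h0
    · simp [hγ, ← h0]
    · have hst := hstrong (γ t) (hmaps ht) a ha
      have hγa : γ t - a = t • v := by simp [hγ]
      rw [hγa] at hst
      have : t * ((Gd (γ t)) v - (Gd a) v) ≥ t ^ 2 * ‖v‖ ^ 2 := by
        have hn : ‖t • v‖ ^ 2 = t ^ 2 * ‖v‖ ^ 2 := by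
          rw [norm_smul, mul_pow, Real.norm_eq_abs, sq_abs]
        calc t ^ 2 * ‖v‖ ^ 2 = ‖t • v‖ ^ 2 := hn.symm
          _ ≤ (Gd (γ t) - Gd a) (t • v) := hst
          _ = t * ((Gd (γ t)) v - (Gd a) v) := by
              simp [ContinuousLinearMap.sub_apply, mul_sub]
      nlinarith
  have hmono : MonotoneOn g (Set.Icc 0 1) := by
    apply monotoneOn_of_hasDerivWithinAt_nonneg (convex_Icc 0 1)
      (fun t ht => (hgd t ht).continuousWithinAt)
      (fun t ht => ((hgd t (interior_subset ht)).mono interior_subset))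
      (fun t ht => hderiv_nonneg t (interior_subset ht))
  have := hmono (Set.left_mem_Icc.2 zero_le_one) (Set.right_mem_Icc.2 zero_le_one) zero_le_one
  have hγ0 : γ 0 = a := by simp [hγ]
  have hγ1 : γ 1 = b := by simp [hγ, hv]
  simp only [hg, hγ0, hγ1] at this
  unfold bregman
  rw [← hv]
  nlinarith [this]

/-- Mirror Descent main inequality. If
`x⁺ = argmin_{u ∈ X} { ⟨h ∇f(x), u⟩ + V(x,u) }`, then for every `y ∈ X`:
`h ⟨∇f(x), x - y⟩ ≤ (h²/2)‖∇f(x)‖² + V(x,y) - V(x⁺,y)`. -/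
theorem mirror_descent_main_inequality
    {E : Type*} [NormedAddCommGroup E] [NormedSpace ℝ E] [FiniteDimensional ℝ E]
    (X : Set E) (hX : Convex ℝ X) (hXcl : IsClosed X)
    (d : E → ℝ) (Gd : E → E →L[ℝ] ℝ)
    (hddiff : ∀ x ∈ X, HasFDerivWithinAt d (Gd x) X x)
    (hstrong : ∀ x ∈ X, ∀ y ∈ X, (Gd x - Gd y) (x - y) ≥ ‖x - y‖ ^ 2)
    (f : E → ℝ) (Gf : E → E →L[ℝ] ℝ)
    (hsub : ∀ x ∈ X, ∀ y ∈ X, f y ≥ f x + Gf x (y - x))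
    (h : ℝ) (hh : 0 < h)
    (x xp : E) (hx : x ∈ X) (hxp : xp ∈ X)
    (hmin : ∀ u ∈ X, h * Gf x xp + bregman d Gd x xp ≤ h * Gf x u + bregman d Gd x u)
    (y : E) (hy : y ∈ X) :
    h * Gf x (x - y) ≤ h ^ 2 / 2 * ‖Gf x‖ ^ 2 + bregman d Gd x y - bregman d Gd xp y := by
  -- First-order optimality condition at xp
  set F : E → ℝ := fun u => h * Gf x u + bregman d Gd x u with hF
  have hFmin : IsMinOn F X xp := fun u hu => hmin u hu
  have hFd : HasFDerivWithinAt F (h • Gf x + (Gd xp - Gd x)) X xp := by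
    have h1 : HasFDerivWithinAt (fun u => h * Gf x u) (h • Gf x) X xp :=
      ((Gf x).hasFDerivAt.const_mul h).hasFDerivWithinAt
    have h2 : HasFDerivWithinAt (fun u => bregman d Gd x u) (Gd xp - Gd x) X xp := by
      have hd' : HasFDerivWithinAt d (Gd xp) X xp := hddiff xp hxp
      have hlin : HasFDerivWithinAt (fun u => d x + Gd x (u - x)) (Gd x) X xp := by
        have : HasFDerivAt (fun u => d x + Gd x (u - x)) (Gd x) xp := by
          have hg : HasFDerivAt (fun u : E => Gd x (u - x)) (Gd x) xp := by
            simp only [map_sub]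
            exact (Gd x).hasFDerivAt.sub_const (Gd x x)
          simpa using hg.const_add (d x)
        exact this.hasFDerivWithinAt
      have := hd'.sub hlin
      apply this.congr (fun u _ => by unfold bregman; simp only [Pi.sub_apply]; ring) (by unfold bregman; simp only [Pi.sub_apply]; ring)
    exact h1.add h2
  have hopt : 0 ≤ (h • Gf x + (Gd xp - Gd x)) (y - xp) :=
    hFmin.localize.hasFDerivWithinAt_nonneg hFd
      (sub_mem_posTangentConeAt_of_segment_subset (hX.segment_subset hxp hy))
  have hopt' : h * Gf x (xp - y) ≤ Gd x (xp - y) - Gd xp (xp - y) := by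
    simp only [ContinuousLinearMap.add_apply, ContinuousLinearMap.sub_apply,
      ContinuousLinearMap.smul_apply, smul_eq_mul] at hopt
    have e1 : Gf x (y - xp) = -Gf x (xp - y) := by rw [← map_neg, neg_sub]
    have e2 : Gd xp (y - xp) = -Gd xp (xp - y) := by rw [← map_neg, neg_sub]
    have e3 : Gd x (y - xp) = -Gd x (xp - y) := by rw [← map_neg, neg_sub]
    rw [e1, e2, e3] at hopt
    linarith
  -- Three-point identity
  have h3pt : Gd x (xp - y) - Gd xp (xp - y) =
      bregman d Gd x y - bregman d Gd xp y - bregman d Gd x xp := by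
    unfold bregman
    have e1 : Gd x (y - x) = Gd x (y - xp) + Gd x (xp - x) := by
      rw [← map_add]; congr 1; abel
    have e2 : Gd x (xp - y) = -Gd x (y - xp) := by rw [← map_neg, neg_sub]
    have e3 : Gd xp (xp - y) = -Gd xp (y - xp) := by rw [← map_neg, neg_sub]
    rw [e1, e2, e3]; ring
  -- Strong convexity lower bound
  have hVxxp : ‖xp - x‖ ^ 2 / 2 ≤ bregman d Gd x xp :=
    bregman_lower_bound X hX d Gd hddiff hstrong hx hxp
  -- Cauchy–Schwarz-type bound
  have hcs : Gf x (x - xp) ≤ ‖Gf x‖ * ‖xp - x‖ := by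
    calc Gf x (x - xp) ≤ ‖Gf x (x - xp)‖ := le_abs_self _
      _ ≤ ‖Gf x‖ * ‖x - xp‖ := (Gf x).le_opNorm _
      _ = ‖Gf x‖ * ‖xp - x‖ := by rw [norm_sub_rev]
  -- Combine
  have hsplit : Gf x (x - y) = Gf x (x - xp) + Gf x (xp - y) := by
    rw [← map_add]; congr 1; abel
  have hfinal : h * Gf x (x - xp) - bregman d Gd x xp ≤ h ^ 2 / 2 * ‖Gf x‖ ^ 2 := by
    have h1 : h * Gf x (x - xp) ≤ h * (‖Gf x‖ * ‖xp - x‖) :=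
      mul_le_mul_of_nonneg_left hcs hh.le
    nlinarith [sq_nonneg (h * ‖Gf x‖ - ‖xp - x‖)]
  rw [hsplit]
  have := hopt'
  rw [h3pt] at this
  nlinarith
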